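/- The action of Sp_{2n}(ℝ) on the Siegel upper half-space H_n is transitive: for every Z ∈ H_n there exists g ∈ Sp_{2n}(ℝ) with g·(i1_n) = Z. Consequently H_n ≅ Sp_{2n}(ℝ)/U_n(ℝ), where U_n(ℝ) is the stabilizer of i1_n. -/

import Mathlib

open Matrix ComplexOrder

/-- The standard symplectic form matrix `J = [[0, 1ₙ], [-1ₙ, 0]]`. -/
def siegelJ (n : ℕ) : Matrix (Fin n ⊕ Fin n) (Fin n ⊕ Fin n) ℝ :=
  Matrix.fromBlocks 0 1 (-1) 0

/-- The symplectic group `Sp_{2n}(ℝ)`: real `2n × 2n` matrices `g` with `gᵀ J g = J`. -/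
def Sp (n : ℕ) : Set (Matrix (Fin n ⊕ Fin n) (Fin n ⊕ Fin n) ℝ) :=
  {g | gᵀ * siegelJ n * g = siegelJ n}

/-- The Siegel upper half-space `H_n`. -/
def SiegelUHS (n : ℕ) : Set (Matrix (Fin n) (Fin n) ℂ) :=
  {Z | Zᵀ = Z ∧ ((2 * Complex.I)⁻¹ • (Z - Z.map (starRingEnd ℂ))).PosDef}

/-- The action `g · Z = (AZ + B)(CZ + D)⁻¹`, where `g = [[A,B],[C,D]]` in `n × n` blocks. -/
noncomputable def spAct {n : ℕ} (g : Matrix (Fin n ⊕ Fin n) (Fin n ⊕ Fin n) ℝ)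
    (Z : Matrix (Fin n) (Fin n) ℂ) : Matrix (Fin n) (Fin n) ℂ :=
  (g.toBlocks₁₁.map Complex.ofReal * Z + g.toBlocks₁₂.map Complex.ofReal) *
    (g.toBlocks₂₁.map Complex.ofReal * Z + g.toBlocks₂₂.map Complex.ofReal)⁻¹

namespace SiegelAux

variable {n : ℕ}

/-- Complexification of the blocks. -/
noncomputable def cA (g : Matrix (Fin n ⊕ Fin n) (Fin n ⊕ Fin n) ℝ) :
    Matrix (Fin n) (Fin n) ℂ := g.toBlocks₁₁.map Complex.ofReal
noncomputable def cB (g : Matrix (Fin n ⊕ Fin n) (Fin n ⊕ Fin n) ℝ) :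
    Matrix (Fin n) (Fin n) ℂ := g.toBlocks₁₂.map Complex.ofReal
noncomputable def cC (g : Matrix (Fin n ⊕ Fin n) (Fin n ⊕ Fin n) ℝ) :
    Matrix (Fin n) (Fin n) ℂ := g.toBlocks₂₁.map Complex.ofReal
noncomputable def cD (g : Matrix (Fin n ⊕ Fin n) (Fin n ⊕ Fin n) ℝ) :
    Matrix (Fin n) (Fin n) ℂ := g.toBlocks₂₂.map Complex.ofReal

lemma mapC_mul {m p q : Type*} [Fintype p] (M : Matrix m p ℝ) (N : Matrix p q ℝ) :
    (M * N).map Complex.ofReal = M.map Complex.ofReal * N.map Complex.ofReal :=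
  Matrix.map_mul (f := Complex.ofRealHom)

lemma mapC_transpose {m p : Type*} (M : Matrix m p ℝ) :
    (Mᵀ).map Complex.ofReal = (M.map Complex.ofReal)ᵀ :=
  Matrix.transpose_map

lemma mapC_one {m : Type*} [DecidableEq m] [Fintype m] :
    ((1 : Matrix m m ℝ)).map Complex.ofReal = 1 :=
  Matrix.map_one _ Complex.ofReal_zero Complex.ofReal_one

lemma mapC_zero {m p : Type*} :
    ((0 : Matrix m p ℝ)).map Complex.ofReal = 0 :=
  Matrix.map_zero _ Complex.ofReal_zero

lemma mapC_neg {m p : Type*} (M : Matrix m p ℝ) :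
    ((-M)).map Complex.ofReal = -(M.map Complex.ofReal) := by
  ext i j; simp

lemma mapC_conjTranspose {m p : Type*} (M : Matrix m p ℝ) :
    (M.map Complex.ofReal)ᴴ = (M.map Complex.ofReal)ᵀ := by
  ext i j
  simp [Matrix.conjTranspose_apply, Matrix.map_apply]

lemma spAct_eq (g : Matrix (Fin n ⊕ Fin n) (Fin n ⊕ Fin n) ℝ) (Z : Matrix (Fin n) (Fin n) ℂ) :
    spAct g Z = (cA g * Z + cB g) * (cC g * Z + cD g)⁻¹ := rfl

lemma map_eq_fromBlocks (g : Matrix (Fin n ⊕ Fin n) (Fin n ⊕ Fin n) ℝ) :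
    g.map Complex.ofReal = Matrix.fromBlocks (cA g) (cB g) (cC g) (cD g) := by
  rw [cA, cB, cC, cD]
  exact (Matrix.fromBlocks_toBlocks _).symm

lemma complexified {g : Matrix (Fin n ⊕ Fin n) (Fin n ⊕ Fin n) ℝ} (hg : g ∈ Sp n) :
    (g.map Complex.ofReal)ᵀ *
      (Matrix.fromBlocks 0 1 (-1) 0 : Matrix (Fin n ⊕ Fin n) (Fin n ⊕ Fin n) ℂ)
      * g.map Complex.ofReal = Matrix.fromBlocks 0 1 (-1) 0 := by
  have h1 : ((gᵀ * siegelJ n * g).map Complex.ofReal) = (siegelJ n).map Complex.ofReal :=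
    congrArg (fun M => M.map Complex.ofReal) hg
  have hJ : (siegelJ n).map Complex.ofReal
      = (Matrix.fromBlocks 0 1 (-1) 0 : Matrix (Fin n ⊕ Fin n) (Fin n ⊕ Fin n) ℂ) := by
    rw [siegelJ, Matrix.fromBlocks_map]
    rw [mapC_zero, mapC_one, show ((-1 : Matrix (Fin n) (Fin n) ℝ)).map Complex.ofReal = -1 by
      rw [mapC_neg, mapC_one]]
  rw [mapC_mul, mapC_mul, mapC_transpose, hJ] at h1
  exact h1

lemma relations {g : Matrix (Fin n ⊕ Fin n) (Fin n ⊕ Fin n) ℝ} (hg : g ∈ Sp n) :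
    (cA g)ᵀ * cC g = (cC g)ᵀ * cA g ∧ (cB g)ᵀ * cD g = (cD g)ᵀ * cB g ∧
    (cA g)ᵀ * cD g - (cC g)ᵀ * cB g = 1 ∧ (cD g)ᵀ * cA g - (cB g)ᵀ * cC g = 1 := by
  have h := complexified hg
  rw [map_eq_fromBlocks, Matrix.fromBlocks_transpose, Matrix.fromBlocks_multiply,
    Matrix.fromBlocks_multiply] at h
  rw [Matrix.fromBlocks_inj] at h
  obtain ⟨h11, h12, h21, h22⟩ := h
  simp only [Matrix.mul_zero, Matrix.zero_mul, Matrix.mul_one, Matrix.one_mul,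
    Matrix.mul_neg, Matrix.neg_mul, zero_add, add_zero] at h11 h12 h21 h22
  refine ⟨(neg_add_eq_zero.mp h11).symm, (neg_add_eq_zero.mp h22).symm,
    by rw [sub_eq_neg_add]; exact h12, ?_⟩
  have e : (cD g)ᵀ * cA g - (cB g)ᵀ * cC g = -(-((cD g)ᵀ * cA g) + (cB g)ᵀ * cC g) := by abel
  rw [e, h21, neg_neg]

lemma posDef_conj {A : Matrix (Fin n) (Fin n) ℂ} (hA : A.PosDef)
    {B : Matrix (Fin n) (Fin n) ℂ} (hB : IsUnit B.det) : (Bᴴ * A * B).PosDef := by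
  refine Matrix.PosDef.of_dotProduct_mulVec_pos (Matrix.isHermitian_conjTranspose_mul_mul _ hA.1) fun x hx => ?_
  have hBu : IsUnit B := (Matrix.isUnit_iff_isUnit_det B).mpr hB
  have hBx : B *ᵥ x ≠ 0 := by
    intro h
    exact hx (Matrix.mulVec_injective_iff_isUnit.mpr hBu (by simpa using h))
  simpa only [star_mulVec, dotProduct_mulVec, vecMul_vecMul] using hA.dotProduct_mulVec_pos hBx

/-- The key lemma: for `g ∈ Sp n` and `Z ∈ H_n`, the denominator is invertible and
`g · Z ∈ H_n`. -/
lemma key {g : Matrix (Fin n ⊕ Fin n) (Fin n ⊕ Fin n) ℝ} (hg : g ∈ Sp n)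
    {Z : Matrix (Fin n) (Fin n) ℂ} (hZ : Z ∈ SiegelUHS n) :
    IsUnit (cC g * Z + cD g).det ∧ spAct g Z ∈ SiegelUHS n := by
  obtain ⟨hAC, hBD, hAD, hDA⟩ := relations hg
  obtain ⟨hsym, hpos⟩ := hZ
  set A := cA g with hA
  set B := cB g with hB
  set C := cC g with hC
  set D := cD g with hD
  set Zb := Z.map (starRingEnd ℂ) with hZb
  set M1 := A * Z + B with hM1
  set N := C * Z + D with hN
  have hAH : Aᴴ = Aᵀ := mapC_conjTranspose _
  have hBH : Bᴴ = Bᵀ := mapC_conjTranspose _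
  have hCH : Cᴴ = Cᵀ := mapC_conjTranspose _
  have hDH : Dᴴ = Dᵀ := mapC_conjTranspose _
  have hZH : Zᴴ = Zb := by
    rw [hZb, show Zᴴ = Zᵀ.map (starRingEnd ℂ) from rfl, hsym]
  -- symmetry relation
  have claimA : M1ᵀ * N = Nᵀ * M1 := by
    have e1 : M1ᵀ * N - Nᵀ * M1
        = Zᵀ * (Aᵀ*C - Cᵀ*A) * Z + Zᵀ * (Aᵀ*D - Cᵀ*B) - (Dᵀ*A - Bᵀ*C) * Z
          + (Bᵀ*D - Dᵀ*B) := by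
      simp only [hM1, hN, Matrix.transpose_add, Matrix.transpose_mul]
      noncomm_ring
    rw [← sub_eq_zero, e1, hAC, hAD, hDA, hBD]
    simp only [sub_self, Matrix.mul_zero, Matrix.zero_mul, Matrix.mul_one, Matrix.one_mul]
    rw [hsym]
    abel
  -- hermitian relation
  have hNH : Nᴴ = Zb * Cᵀ + Dᵀ := by
    rw [hN, Matrix.conjTranspose_add, Matrix.conjTranspose_mul, hCH, hDH, hZH]
  have hM1H : M1ᴴ = Zb * Aᵀ + Bᵀ := by
    rw [hM1, Matrix.conjTranspose_add, Matrix.conjTranspose_mul, hAH, hBH, hZH]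
  have claimB : Nᴴ * M1 - M1ᴴ * N = Z - Zb := by
    have e2 : Nᴴ * M1 - M1ᴴ * N
        = Zb * (Cᵀ*A - Aᵀ*C) * Z - Zb * (Aᵀ*D - Cᵀ*B) + (Dᵀ*A - Bᵀ*C) * Z
          - (Bᵀ*D - Dᵀ*B) := by
      rw [hNH, hM1H, hM1, hN]
      noncomm_ring
    rw [e2, hAC, hAD, hDA, hBD]
    simp only [sub_self, Matrix.mul_zero, Matrix.zero_mul, Matrix.mul_one, Matrix.one_mul]
    abel
  -- invertibility of the denominator
  have hdet : IsUnit N.det := by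
    rw [isUnit_iff_ne_zero]
    intro h0
    obtain ⟨v, hv, hNv⟩ := (Matrix.exists_mulVec_eq_zero_iff).mpr h0
    have hq : star v ⬝ᵥ ((Z - Zb) *ᵥ v) = 0 := by
      rw [← claimB, Matrix.sub_mulVec, dotProduct_sub]
      have t1 : star v ⬝ᵥ ((Nᴴ * M1) *ᵥ v) = 0 := by
        rw [← Matrix.mulVec_mulVec, Matrix.dotProduct_mulVec, ← Matrix.star_mulVec, hNv]
        simp
      have t2 : star v ⬝ᵥ ((M1ᴴ * N) *ᵥ v) = 0 := by
        rw [← Matrix.mulVec_mulVec, hNv]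
        simp
      rw [t1, t2, sub_zero]
    have hpos' := hpos.dotProduct_mulVec_pos hv
    rw [Matrix.smul_mulVec, dotProduct_smul, hq, smul_zero] at hpos'
    exact lt_irrefl _ hpos'
  refine ⟨hdet, ?_, ?_⟩
  · -- symmetry of W
    show ((A * Z + B) * (C * Z + D)⁻¹)ᵀ = (A * Z + B) * (C * Z + D)⁻¹
    rw [← hM1, ← hN, Matrix.transpose_mul, Matrix.transpose_nonsing_inv]
    have : M1ᵀ = Nᵀ * (M1 * N⁻¹) := by
      rw [← Matrix.mul_assoc, ← claimA, Matrix.mul_assoc, Matrix.mul_nonsing_inv _ hdet,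
        Matrix.mul_one]
    rw [this, ← Matrix.mul_assoc, Matrix.nonsing_inv_mul _ (by rwa [Matrix.det_transpose]),
      Matrix.one_mul]
  · -- positivity of the imaginary part of W
    show ((2 * Complex.I)⁻¹ • (spAct g Z - (spAct g Z).map (starRingEnd ℂ))).PosDef
    set W := (A * Z + B) * (C * Z + D)⁻¹ with hW
    have hspAct : spAct g Z = W := rfl
    have hWsym : Wᵀ = W := by
      rw [hW, Matrix.transpose_mul, Matrix.transpose_nonsing_inv, ← hM1, ← hN]
      have : M1ᵀ = Nᵀ * (M1 * N⁻¹) := by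
        rw [← Matrix.mul_assoc, ← claimA, Matrix.mul_assoc, Matrix.mul_nonsing_inv _ hdet,
          Matrix.mul_one]
      rw [this, ← Matrix.mul_assoc, Matrix.nonsing_inv_mul _ (by rwa [Matrix.det_transpose]),
        Matrix.one_mul]
    have hWb : W.map (starRingEnd ℂ) = Wᴴ := by
      rw [show Wᴴ = Wᵀ.map (starRingEnd ℂ) from rfl, hWsym]
    have hWN : W = M1 * N⁻¹ := by rw [hW, ← hM1, ← hN]
    have hXkey : W - Wᴴ = (N⁻¹)ᴴ * (Nᴴ * M1 - M1ᴴ * N) * N⁻¹ := by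
      have c1 : (N⁻¹)ᴴ * (Nᴴ * M1 - M1ᴴ * N) * N⁻¹
          = ((N * N⁻¹)ᴴ * M1) * N⁻¹ - ((N⁻¹)ᴴ * M1ᴴ) * (N * N⁻¹) := by
        rw [Matrix.conjTranspose_mul]
        noncomm_ring
      rw [c1, Matrix.mul_nonsing_inv _ hdet, Matrix.conjTranspose_one, Matrix.one_mul,
        Matrix.mul_one, hWN, Matrix.conjTranspose_mul]
    have hfinal : (2 * Complex.I)⁻¹ • (W - W.map (starRingEnd ℂ))
        = (N⁻¹)ᴴ * ((2 * Complex.I)⁻¹ • (Z - Zb)) * N⁻¹ := by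
      rw [hWb, hXkey, claimB, Matrix.mul_smul, Matrix.smul_mul]
    rw [hspAct, hfinal]
    exact posDef_conj hpos (Matrix.isUnit_nonsing_inv_det N hdet)

/-! ### Group structure of `Sp n` -/

lemma J_mul_negJ : siegelJ n * (-(siegelJ n)) = 1 := by
  rw [siegelJ, Matrix.fromBlocks_neg, Matrix.fromBlocks_multiply, ← Matrix.fromBlocks_one]
  congr 1 <;> simp

lemma isUnit_J_det : IsUnit (siegelJ n).det :=
  Matrix.isUnit_det_of_right_inverse J_mul_negJ

lemma sp_isUnit_det {g : Matrix (Fin n ⊕ Fin n) (Fin n ⊕ Fin n) ℝ} (hg : g ∈ Sp n) :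
    IsUnit g.det := by
  have h := congrArg Matrix.det hg
  rw [Matrix.det_mul, Matrix.det_mul, Matrix.det_transpose] at h
  have hJ : (siegelJ n).det ≠ 0 := isUnit_J_det.ne_zero
  have h3 : (g.det * g.det) * (siegelJ n).det = 1 * (siegelJ n).det := by
    rw [one_mul]; linear_combination h
  exact IsUnit.of_mul_eq_one _ (mul_right_cancel₀ hJ h3)

lemma one_mem_sp : (1 : Matrix (Fin n ⊕ Fin n) (Fin n ⊕ Fin n) ℝ) ∈ Sp n := by
  show (1 : Matrix (Fin n ⊕ Fin n) (Fin n ⊕ Fin n) ℝ)ᵀ * siegelJ n * 1 = siegelJ n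
  rw [Matrix.transpose_one, Matrix.one_mul, Matrix.mul_one]

lemma mul_mem_sp {g g' : Matrix (Fin n ⊕ Fin n) (Fin n ⊕ Fin n) ℝ}
    (hg : g ∈ Sp n) (hg' : g' ∈ Sp n) : g * g' ∈ Sp n := by
  show (g * g')ᵀ * siegelJ n * (g * g') = siegelJ n
  have : (g * g')ᵀ * siegelJ n * (g * g') = g'ᵀ * (gᵀ * siegelJ n * g) * g' := by
    rw [Matrix.transpose_mul]; noncomm_ring
  rw [this, hg]; exact hg'

lemma inv_mem_sp {g : Matrix (Fin n ⊕ Fin n) (Fin n ⊕ Fin n) ℝ} (hg : g ∈ Sp n) :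
    g⁻¹ ∈ Sp n := by
  have hdet := sp_isUnit_det hg
  show (g⁻¹)ᵀ * siegelJ n * g⁻¹ = siegelJ n
  conv_lhs => rw [← hg]
  have h1 : (g⁻¹)ᵀ * (gᵀ * siegelJ n * g) * g⁻¹ = (g * g⁻¹)ᵀ * siegelJ n * (g * g⁻¹) := by
    rw [Matrix.transpose_mul]; noncomm_ring
  rw [h1, Matrix.mul_nonsing_inv _ hdet, Matrix.transpose_one, Matrix.one_mul, Matrix.mul_one]

/-! ### The action is (partially) multiplicative -/

lemma blocks_mul (g g' : Matrix (Fin n ⊕ Fin n) (Fin n ⊕ Fin n) ℝ) :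
    cA (g * g') = cA g * cA g' + cB g * cC g' ∧
    cB (g * g') = cA g * cB g' + cB g * cD g' ∧
    cC (g * g') = cC g * cA g' + cD g * cC g' ∧
    cD (g * g') = cC g * cB g' + cD g * cD g' := by
  have h : (g * g').map Complex.ofReal
      = Matrix.fromBlocks (cA g * cA g' + cB g * cC g') (cA g * cB g' + cB g * cD g')
        (cC g * cA g' + cD g * cC g') (cC g * cB g' + cD g * cD g') := by
    rw [mapC_mul, map_eq_fromBlocks g, map_eq_fromBlocks g', Matrix.fromBlocks_multiply]
  have h2 := map_eq_fromBlocks (g * g')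
  rw [h] at h2
  obtain ⟨e1, e2, e3, e4⟩ := Matrix.fromBlocks_inj.mp h2
  exact ⟨e1.symm, e2.symm, e3.symm, e4.symm⟩

lemma spAct_one (Z : Matrix (Fin n) (Fin n) ℂ) : spAct 1 Z = Z := by
  have h1 : (1 : Matrix (Fin n ⊕ Fin n) (Fin n ⊕ Fin n) ℝ)
      = Matrix.fromBlocks 1 0 0 1 := Matrix.fromBlocks_one.symm
  rw [spAct_eq, cA, cB, cC, cD, h1, Matrix.toBlocks_fromBlocks₁₁, Matrix.toBlocks_fromBlocks₁₂,
    Matrix.toBlocks_fromBlocks₂₁, Matrix.toBlocks_fromBlocks₂₂, mapC_one, mapC_zero,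
    Matrix.one_mul, Matrix.zero_mul, add_zero, zero_add,
    show (1 : Matrix (Fin n) (Fin n) ℂ)⁻¹ = 1 from Matrix.inv_eq_left_inv (by simp),
    Matrix.mul_one]

lemma spAct_mul {g g' : Matrix (Fin n ⊕ Fin n) (Fin n ⊕ Fin n) ℝ}
    (hg : g ∈ Sp n) (hg' : g' ∈ Sp n) {Z : Matrix (Fin n) (Fin n) ℂ} (hZ : Z ∈ SiegelUHS n) :
    spAct (g * g') Z = spAct g (spAct g' Z) := by
  obtain ⟨hdet', hW'⟩ := key hg' hZ
  obtain ⟨e1, e2, e3, e4⟩ := blocks_mul g g'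
  set N' := cC g' * Z + cD g' with hN'
  set M1' := cA g' * Z + cB g' with hM1'
  have hW'eq : spAct g' Z = M1' * N'⁻¹ := rfl
  have hnum : cA (g * g') * Z + cB (g * g') = (cA g * (M1' * N'⁻¹) + cB g) * N' := by
    have expand : (cA g * (M1' * N'⁻¹) + cB g) * N'
        = cA g * (M1' * (N'⁻¹ * N')) + cB g * N' := by noncomm_ring
    rw [expand, Matrix.nonsing_inv_mul _ hdet', Matrix.mul_one, e1, e2, hM1', hN']
    noncomm_ring
  have hden : cC (g * g') * Z + cD (g * g') = (cC g * (M1' * N'⁻¹) + cD g) * N' := by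
    have expand : (cC g * (M1' * N'⁻¹) + cD g) * N'
        = cC g * (M1' * (N'⁻¹ * N')) + cD g * N' := by noncomm_ring
    rw [expand, Matrix.nonsing_inv_mul _ hdet', Matrix.mul_one, e3, e4, hM1', hN']
    noncomm_ring
  rw [spAct_eq, hnum, hden, Matrix.mul_inv_rev]
  have expand2 : (cA g * (M1' * N'⁻¹) + cB g) * N' * (N'⁻¹ * (cC g * (M1' * N'⁻¹) + cD g)⁻¹)
      = (cA g * (M1' * N'⁻¹) + cB g) * (N' * N'⁻¹) * (cC g * (M1' * N'⁻¹) + cD g)⁻¹ := by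
    noncomm_ring
  rw [expand2, Matrix.mul_nonsing_inv _ hdet', Matrix.mul_one]
  rfl

/-! ### The base point -/

lemma base_mem : Complex.I • (1 : Matrix (Fin n) (Fin n) ℂ) ∈ SiegelUHS n := by
  constructor
  · rw [Matrix.transpose_smul, Matrix.transpose_one]
  · have hmap : (Complex.I • (1 : Matrix (Fin n) (Fin n) ℂ)).map (starRingEnd ℂ)
        = (-Complex.I) • 1 := by
      ext i j
      by_cases h : i = j <;>
        simp [Matrix.map_apply, Matrix.one_apply, h]
    rw [hmap]
    have h2 : Complex.I • (1 : Matrix (Fin n) (Fin n) ℂ) - (-Complex.I) • 1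
        = (2 * Complex.I) • 1 := by
      rw [← sub_smul]
      congr 1
      ring
    rw [h2, smul_smul, inv_mul_cancel₀ (by simp [Complex.I_ne_zero]), one_smul]
    exact Matrix.PosDef.one

/-! ### Transitivity -/

lemma real_isHermitian_of_symm {Y : Matrix (Fin n) (Fin n) ℝ} (hsym : Yᵀ = Y) :
    Y.IsHermitian := by
  show Yᴴ = Y
  ext i j
  have : Y j i = Y i j := congrFun (congrFun hsym i) j
  simp [Matrix.conjTranspose_apply, this]

lemma real_posdef_of_mapC {Y : Matrix (Fin n) (Fin n) ℝ} (hsym : Yᵀ = Y)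
    (h : (Y.map Complex.ofReal).PosDef) : Y.PosDef := by
  refine Matrix.PosDef.of_dotProduct_mulVec_pos (real_isHermitian_of_symm hsym) fun x hx => ?_
  have hxc : (fun i => (x i : ℂ)) ≠ 0 := by
    intro h0
    apply hx
    funext i
    have h1 : (x i : ℂ) = 0 := by simpa using congrFun h0 i
    exact_mod_cast h1
  have hp := h.dotProduct_mulVec_pos hxc
  have hkey : star (fun i => (x i : ℂ)) ⬝ᵥ ((Y.map Complex.ofReal) *ᵥ fun i => (x i : ℂ))
      = ((x ⬝ᵥ Y *ᵥ x : ℝ) : ℂ) := by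
    simp only [dotProduct, Matrix.mulVec, Matrix.map_apply, Pi.star_apply, Complex.star_def,
      Complex.conj_ofReal]
    push_cast
    rfl
  rw [hkey] at hp
  exact_mod_cast hp

lemma transitive {Z : Matrix (Fin n) (Fin n) ℂ} (hZ : Z ∈ SiegelUHS n) :
    ∃ g ∈ Sp n, spAct g (Complex.I • (1 : Matrix (Fin n) (Fin n) ℂ)) = Z := by
  obtain ⟨hsym, hpos⟩ := hZ
  set X := Z.map Complex.re with hX
  set Y := Z.map Complex.im with hY
  have hXsym : Xᵀ = X := by
    ext i j
    have : Z j i = Z i j := congrFun (congrFun hsym i) j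
    simp [hX, Matrix.map_apply, this]
  have hYsym : Yᵀ = Y := by
    ext i j
    have : Z j i = Z i j := congrFun (congrFun hsym i) j
    simp [hY, Matrix.map_apply, this]
  have hYmap : (2 * Complex.I)⁻¹ • (Z - Z.map (starRingEnd ℂ)) = Y.map Complex.ofReal := by
    ext i j
    simp only [Matrix.smul_apply, Matrix.sub_apply, Matrix.map_apply, hY, smul_eq_mul]
    rw [Complex.sub_conj]
    have h2I : (2 : ℂ) * Complex.I ≠ 0 := by simp [Complex.I_ne_zero]
    field_simp
    push_cast
    ring
  have hYc : (Y.map Complex.ofReal).PosDef := by rw [← hYmap]; exact hpos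
  have hYr : Y.PosDef := real_posdef_of_mapC hYsym hYc
  have hYpsd := hYr.posSemidef
  open scoped MatrixOrder in
  set R := CFC.sqrt Y with hR
  have hRsym : Rᵀ = R := by
    open scoped MatrixOrder in
    have h := (CFC.sqrt_nonneg Y).posSemidef.1
    ext i j
    have : star (R j i) = R i j := congrFun (congrFun h i) j
    simpa using this
  have hRR : R * R = Y := by
    open scoped MatrixOrder in
    exact CFC.sqrt_mul_sqrt_self Y hYpsd.nonneg
  have hRdet : IsUnit R.det := by
    have hYdet : Y.det ≠ 0 := hYr.det_pos.ne'
    rw [isUnit_iff_ne_zero]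
    intro h0
    apply hYdet
    rw [← hRR, Matrix.det_mul, h0, mul_zero]
  have hRinvT : (R⁻¹)ᵀ = R⁻¹ := by rw [Matrix.transpose_nonsing_inv, hRsym]
  refine ⟨Matrix.fromBlocks R (X * R⁻¹) 0 R⁻¹, ?_, ?_⟩
  · -- membership in Sp n
    show (Matrix.fromBlocks R (X * R⁻¹) 0 R⁻¹)ᵀ * siegelJ n
        * Matrix.fromBlocks R (X * R⁻¹) 0 R⁻¹ = siegelJ n
    rw [siegelJ, Matrix.fromBlocks_transpose, Matrix.fromBlocks_multiply,
      Matrix.fromBlocks_multiply]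
    rw [Matrix.fromBlocks_inj]
    refine ⟨?_, ?_, ?_, ?_⟩
    · simp
    · simp only [Matrix.mul_zero, Matrix.zero_mul, Matrix.mul_one, Matrix.one_mul,
        Matrix.mul_neg, Matrix.neg_mul, zero_add, add_zero, Matrix.transpose_zero]
      rw [hRsym, Matrix.mul_nonsing_inv _ hRdet]
      simp
    · simp only [Matrix.mul_zero, Matrix.zero_mul, Matrix.mul_one, Matrix.one_mul,
        Matrix.mul_neg, Matrix.neg_mul, zero_add, add_zero, Matrix.transpose_zero]
      rw [hRinvT, Matrix.nonsing_inv_mul _ hRdet]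
    · simp only [Matrix.mul_zero, Matrix.zero_mul, Matrix.mul_one, Matrix.one_mul,
        Matrix.mul_neg, Matrix.neg_mul, zero_add, add_zero, Matrix.transpose_zero]
      rw [Matrix.transpose_mul, hRinvT, hXsym]
      noncomm_ring
  · -- the action sends i·1 to Z
    set Rc := R.map Complex.ofReal with hRc
    set Xc := X.map Complex.ofReal with hXc
    have hRcdet : IsUnit Rc.det := by
      have hdetc : (R.map Complex.ofReal).det = (R.det : ℂ) :=
        (RingHom.map_det Complex.ofRealHom R).symm
      rw [hRc, hdetc, isUnit_iff_ne_zero]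
      exact_mod_cast hRdet.ne_zero
    have hmapinv : (R⁻¹).map Complex.ofReal = Rc⁻¹ := by
      refine (Matrix.inv_eq_right_inv ?_).symm
      rw [hRc, ← mapC_mul, Matrix.mul_nonsing_inv _ hRdet, mapC_one]
    have hblocks : spAct (Matrix.fromBlocks R (X * R⁻¹) 0 R⁻¹)
          (Complex.I • (1 : Matrix (Fin n) (Fin n) ℂ))
        = (Rc * (Complex.I • 1) + Xc * Rc⁻¹)
          * ((0 : Matrix (Fin n) (Fin n) ℂ) * (Complex.I • 1) + Rc⁻¹)⁻¹ := by
      rw [spAct_eq, cA, cB, cC, cD, Matrix.toBlocks_fromBlocks₁₁, Matrix.toBlocks_fromBlocks₁₂,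
        Matrix.toBlocks_fromBlocks₂₁, Matrix.toBlocks_fromBlocks₂₂, mapC_zero, mapC_mul, hmapinv,
        ← hRc, ← hXc]
    rw [hblocks, Matrix.zero_mul, zero_add, Matrix.nonsing_inv_nonsing_inv _ hRcdet]
    have expand : (Rc * (Complex.I • 1) + Xc * Rc⁻¹) * Rc
        = Complex.I • (Rc * Rc) + Xc * (Rc⁻¹ * Rc) := by
      rw [Matrix.add_mul]
      congr 1
      · rw [Matrix.mul_smul, Matrix.mul_one, Matrix.smul_mul]
      · rw [Matrix.mul_assoc]
    rw [expand, Matrix.nonsing_inv_mul _ hRcdet, Matrix.mul_one]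
    have hRcRc : Rc * Rc = Y.map Complex.ofReal := by rw [hRc, ← mapC_mul, hRR]
    rw [hRcRc]
    ext i j
    simp only [Matrix.add_apply, Matrix.smul_apply, Matrix.map_apply, hXc, hX, hY,
      smul_eq_mul]
    rw [mul_comm, add_comm, Complex.re_add_im]


end SiegelAux

/-- The action of `Sp_{2n}(ℝ)` on the Siegel upper half-space is transitive (every point
is `g · (i·1ₙ)` for some symplectic `g`); consequently two symplectic matrices move the
base point `i·1ₙ` to the same point exactly when they differ by right multiplication by an
element of the stabilizer of `i·1ₙ`, so `H_n ≅ Sp_{2n}(ℝ)/U_n(ℝ)`. -/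
theorem statement5 {n : ℕ} (hn : 1 ≤ n) :
    (∀ Z ∈ SiegelUHS n, ∃ g ∈ Sp n,
      spAct g (Complex.I • (1 : Matrix (Fin n) (Fin n) ℂ)) = Z) ∧
    (∀ g ∈ Sp n, ∀ g' ∈ Sp n,
      (spAct g (Complex.I • (1 : Matrix (Fin n) (Fin n) ℂ)) =
          spAct g' (Complex.I • (1 : Matrix (Fin n) (Fin n) ℂ)) ↔
        ∃ u ∈ Sp n,
          spAct u (Complex.I • (1 : Matrix (Fin n) (Fin n) ℂ)) =
            Complex.I • (1 : Matrix (Fin n) (Fin n) ℂ) ∧ g' = g * u)) := by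
  constructor
  · intro Z hZ
    exact SiegelAux.transitive hZ
  · intro g hg g' hg'
    constructor
    · intro h
      have hdet := SiegelAux.sp_isUnit_det hg
      refine ⟨g⁻¹ * g', SiegelAux.mul_mem_sp (SiegelAux.inv_mem_sp hg) hg', ?_, ?_⟩
      · rw [SiegelAux.spAct_mul (SiegelAux.inv_mem_sp hg) hg' SiegelAux.base_mem, ← h,
          ← SiegelAux.spAct_mul (SiegelAux.inv_mem_sp hg) hg SiegelAux.base_mem,
          Matrix.nonsing_inv_mul _ hdet, SiegelAux.spAct_one]
      · rw [← Matrix.mul_assoc, Matrix.mul_nonsing_inv _ hdet, Matrix.one_mul]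
    · rintro ⟨u, hu, hfix, rfl⟩
      rw [SiegelAux.spAct_mul hg hu SiegelAux.base_mem, hfix]
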